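/- Let N = pq where p and q are distinct primes, and let Σ = {(t, t²) : t ∈ ℤ/Nℤ} be the parabola in (ℤ/Nℤ)². Then for every function f : (ℤ/Nℤ)² → ℂ, ( (1/|Σ|) · Σ_{m∈Σ} |f̂(m)|² )^{1/2} ≤ √2 · N^{-1} · ( Σ_{x∈(ℤ/Nℤ)²} |f(x)|^{4/3} )^{3/4}. -/

import Mathlib

open scoped BigOperators

/-- Normalized Fourier transform on `(ℤ/Nℤ)²`:
`f̂(m) = N⁻¹ ∑ₓ f(x) e^{-2πi (x·m)/N}` where `x·m = x₁m₁ + x₂m₂`. -/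
noncomputable def dft (N : ℕ) [NeZero N] (f : ZMod N × ZMod N → ℂ)
    (m : ZMod N × ZMod N) : ℂ :=
  (N : ℂ)⁻¹ * ∑ x : ZMod N × ZMod N,
    f x * Complex.exp (-2 * Real.pi * Complex.I *
      (((x.1 * m.1 + x.2 * m.2).val : ℕ) : ℂ) / (N : ℂ))

/-- The parabola `Σ = {(t, t²) : t ∈ ℤ/Nℤ}` in `(ℤ/Nℤ)²`. -/
def parabola (N : ℕ) [NeZero N] : Finset (ZMod N × ZMod N) :=
  Finset.univ.image (fun t : ZMod N => (t, t ^ 2))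

open Finset

def solSet' (R : Type*) [CommRing R] [Fintype R] [DecidableEq R] (a b : R) :
    Finset (R × R) :=
  Finset.univ.filter (fun t : R × R => t.1 + t.2 = a ∧ t.1 ^ 2 + t.2 ^ 2 = b)


lemma mem_solSet' {R : Type*} [CommRing R] [Fintype R] [DecidableEq R] {a b : R}
    {t : R × R} : t ∈ solSet' R a b ↔ t.1 + t.2 = a ∧ t.1 ^ 2 + t.2 ^ 2 = b := by
  simp [solSet']

lemma solSet'_card_prime (p : ℕ) [NeZero p] (hp : p.Prime) (a b : ZMod p) :
    (solSet' (ZMod p) a b).card ≤ 2 := by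
  haveI : Fact p.Prime := ⟨hp⟩
  classical
  set T : Finset (ZMod p) := Finset.univ.filter (fun u => u ^ 2 + (a - u) ^ 2 = b) with hT
  have h1 : (solSet' (ZMod p) a b).card ≤ T.card := by
    apply Finset.card_le_card_of_injOn (fun t => t.1)
    · intro t ht
      simp only [mem_coe, mem_solSet'] at ht
      have h2 : t.2 = a - t.1 := by linear_combination ht.1
      simp only [hT, mem_coe, mem_filter, mem_univ, true_and]
      rw [← h2]; exact ht.2
    · intro t ht t' ht' h
      simp only [mem_coe, mem_solSet'] at ht ht'
      have h2 : t.2 = a - t.1 := by linear_combination ht.1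
      have h2' : t'.2 = a - t'.1 := by linear_combination ht'.1
      have hfst : t.1 = t'.1 := h
      have : t.2 = t'.2 := by rw [h2, h2', hfst]
      exact Prod.ext hfst this
  refine h1.trans ?_
  rcases eq_or_ne p 2 with hp2 | hp2
  · subst hp2
    exact (Finset.card_le_card (Finset.subset_univ T)).trans (by simp)
  · have h2 : (2 : ZMod p) ≠ 0 := by
      intro h
      have : (p : ℕ) ∣ 2 := by
        have := (ZMod.natCast_eq_zero_iff 2 p).mp (by exact_mod_cast h)
        exact this
      exact hp2 ((Nat.prime_dvd_prime_iff_eq hp Nat.prime_two).mp this)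
    rcases T.eq_empty_or_nonempty with h | ⟨u0, hu0⟩
    · simp [h]
    · have hsub : T ⊆ {u0, a - u0} := by
        intro u hu
        simp only [hT, mem_filter, mem_univ, true_and] at hu hu0
        have key : (2 : ZMod p) * ((u - u0) * (u + u0 - a)) = 0 := by
          linear_combination hu - hu0
        rcases mul_eq_zero.mp key with h | h
        · exact absurd h h2
        rcases mul_eq_zero.mp h with h | h
        · simp [sub_eq_zero.mp h]
        · have : u = a - u0 := by linear_combination h
          simp [this]
      exact (Finset.card_le_card hsub).trans ((Finset.card_insert_le _ _).trans (by simp))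

lemma solSet'_card_pq (p q : ℕ) (hp : p.Prime) (hq : q.Prime) (hpq : p ≠ q)
    [NeZero (p * q)] (a b : ZMod (p * q)) :
    (solSet' (ZMod (p * q)) a b).card ≤ 4 := by
  haveI : Fact p.Prime := ⟨hp⟩
  haveI : Fact q.Prime := ⟨hq⟩
  haveI : NeZero p := ⟨hp.ne_zero⟩
  haveI : NeZero q := ⟨hq.ne_zero⟩
  have hco : Nat.Coprime p q := (Nat.coprime_primes hp hq).mpr hpq
  let φ : ZMod (p * q) ≃+* ZMod p × ZMod q := ZMod.chineseRemainder hco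
  have key : (solSet' (ZMod (p * q)) a b).card ≤
      ((solSet' (ZMod p) (φ a).1 (φ b).1) ×ˢ (solSet' (ZMod q) (φ a).2 (φ b).2)).card := by
    apply Finset.card_le_card_of_injOn
      (fun t => (((φ t.1).1, (φ t.2).1), ((φ t.1).2, (φ t.2).2)))
    · intro t ht
      simp only [mem_coe, mem_solSet'] at ht
      simp only [Finset.mem_coe, Finset.mem_product, mem_solSet']
      have e1 : φ (t.1 + t.2) = φ a := by rw [ht.1]
      have e2 : φ (t.1 ^ 2 + t.2 ^ 2) = φ b := by rw [ht.2]
      rw [map_add] at e1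
      rw [map_add, map_pow, map_pow] at e2
      constructor
      · constructor
        · exact congrArg Prod.fst e1
        · exact congrArg Prod.fst e2
      · constructor
        · exact congrArg Prod.snd e1
        · exact congrArg Prod.snd e2
    · intro t ht t' ht' h
      simp only [Prod.mk.injEq] at h
      have h1 : φ t.1 = φ t'.1 := Prod.ext h.1.1 h.2.1
      have h2 : φ t.2 = φ t'.2 := Prod.ext h.1.2 h.2.2
      exact Prod.ext (φ.injective h1) (φ.injective h2)
  refine key.trans ?_
  rw [Finset.card_product]
  calc _ ≤ 2 * 2 := Nat.mul_le_mul (solSet'_card_prime p hp _ _) (solSet'_card_prime q hq _ _)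
  _ = 4 := rfl
section chars
variable (N : ℕ) [NeZero N]

lemma stdAddChar_neg_eq_conj (c : ZMod N) :
    ZMod.stdAddChar (-c) = (starRingEnd ℂ) (ZMod.stdAddChar c) := by
  have habs : Complex.normSq (ZMod.stdAddChar c) = 1 := by
    rw [ZMod.stdAddChar_apply]
    simp [Complex.normSq_eq_norm_sq, Circle.norm_coe]
  have hne : (ZMod.stdAddChar c : ℂ) ≠ 0 := by
    intro h; rw [h] at habs; simp at habs
  have h1 : ZMod.stdAddChar (-c) * ZMod.stdAddChar c = 1 := by
    rw [← AddChar.map_add_eq_mul]; simp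
  have h2 : (starRingEnd ℂ) (ZMod.stdAddChar c) * ZMod.stdAddChar c = 1 := by
    rw [mul_comm, Complex.mul_conj, habs]; norm_num
  exact mul_right_cancel₀ hne (h1.trans h2.symm)

lemma char_sum (t : ZMod N) :
    ∑ i : ZMod N, ZMod.stdAddChar (t * i) = if t = 0 then (N : ℂ) else 0 := by
  split_ifs with h
  · simp only [h, zero_mul, AddChar.map_zero_eq_one, Finset.sum_const, Finset.card_univ,
      ZMod.card, nsmul_eq_mul, mul_one]
  · exact AddChar.sum_eq_zero_of_ne_one (ZMod.isPrimitive_stdAddChar N h)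

lemma char_sum2 (u : ZMod N × ZMod N) :
    ∑ x : ZMod N × ZMod N, ZMod.stdAddChar (x.1 * u.1 + x.2 * u.2) =
      if u = 0 then ((N : ℂ)) ^ 2 else 0 := by
  rw [Fintype.sum_prod_type]
  simp only [AddChar.map_add_eq_mul]
  rw [← Finset.sum_mul_sum]
  simp only [mul_comm _ u.1, mul_comm _ u.2]
  rw [char_sum, char_sum]
  by_cases h1 : u.1 = 0 <;> by_cases h2 : u.2 = 0 <;>
    simp [h1, h2, Prod.ext_iff, sq]
end chars

lemma exp_eq_char (N : ℕ) [NeZero N] (c : ZMod N) :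
    Complex.exp (-2 * Real.pi * Complex.I * ((c.val : ℕ) : ℂ) / (N : ℂ)) =
      ZMod.stdAddChar (-c) := by
  have h1 : (-c : ZMod N) = ((-(c.val : ℤ) : ℤ) : ZMod N) := by
    push_cast
    rw [ZMod.natCast_zmod_val]
  rw [h1, ZMod.stdAddChar_coe]
  congr 1
  push_cast
  ring

lemma dft_eq (N : ℕ) [NeZero N] (f : ZMod N × ZMod N → ℂ) (m : ZMod N × ZMod N) :
    dft N f m = (N : ℂ)⁻¹ * ∑ x : ZMod N × ZMod N,
      f x * ZMod.stdAddChar (-(x.1 * m.1 + x.2 * m.2)) := by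
  unfold dft
  congr 1
  refine Finset.sum_congr rfl fun x _ => ?_
  rw [exp_eq_char]

noncomputable def ext2 (N : ℕ) [NeZero N] (a : ZMod N → ℂ) (x : ZMod N × ZMod N) : ℂ :=
  ∑ t : ZMod N, a t * ZMod.stdAddChar (x.1 * t + x.2 * t ^ 2)

noncomputable def bcoef (N : ℕ) [NeZero N] (a : ZMod N → ℂ) (s : ZMod N × ZMod N) : ℂ :=
  ∑ t ∈ solSet' (ZMod N) s.1 s.2, a t.1 * a t.2

lemma solSet'_eq_filter (N : ℕ) [NeZero N] (s : ZMod N × ZMod N) :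
    solSet' (ZMod N) s.1 s.2 =
      Finset.univ.filter
        (fun t : ZMod N × ZMod N => (t.1 + t.2, t.1 ^ 2 + t.2 ^ 2) = s) := by
  ext t
  simp [solSet', Prod.ext_iff]

lemma ext2_sq (N : ℕ) [NeZero N] (a : ZMod N → ℂ) (x : ZMod N × ZMod N) :
    ext2 N a x ^ 2 =
      ∑ s : ZMod N × ZMod N, bcoef N a s * ZMod.stdAddChar (x.1 * s.1 + x.2 * s.2) := by
  have key : ∀ s : ZMod N × ZMod N,
      bcoef N a s * ZMod.stdAddChar (x.1 * s.1 + x.2 * s.2) =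
      ∑ t ∈ Finset.univ.filter
          (fun t : ZMod N × ZMod N => (t.1 + t.2, t.1 ^ 2 + t.2 ^ 2) = s),
        a t.1 * a t.2 *
          ZMod.stdAddChar (x.1 * (t.1 + t.2) + x.2 * (t.1 ^ 2 + t.2 ^ 2)) := by
    intro s
    rw [bcoef, solSet'_eq_filter, Finset.sum_mul]
    refine Finset.sum_congr rfl fun t ht => ?_
    rw [Finset.mem_filter] at ht
    rw [← ht.2]
  rw [Finset.sum_congr rfl fun s _ => key s,
    Finset.sum_fiberwise Finset.univ
      (fun t : ZMod N × ZMod N => (t.1 + t.2, t.1 ^ 2 + t.2 ^ 2))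
      (fun t => a t.1 * a t.2 *
        ZMod.stdAddChar (x.1 * (t.1 + t.2) + x.2 * (t.1 ^ 2 + t.2 ^ 2)))]
  rw [sq, ext2, Finset.sum_mul_sum, Fintype.sum_prod_type]
  refine Finset.sum_congr rfl fun t _ => Finset.sum_congr rfl fun u _ => ?_
  have hadd := AddChar.map_add_eq_mul (ZMod.stdAddChar (N := N))
    (x.1 * t + x.2 * t ^ 2) (x.1 * u + x.2 * u ^ 2)
  rw [show x.1 * ((t, u).1 + (t, u).2) + x.2 * ((t, u).1 ^ 2 + (t, u).2 ^ 2) =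
      (x.1 * t + x.2 * t ^ 2) + (x.1 * u + x.2 * u ^ 2) from by ring, hadd]
  ring

lemma parseval_aux (N : ℕ) [NeZero N] (b : ZMod N × ZMod N → ℂ) :
    ∑ x : ZMod N × ZMod N,
        (∑ s : ZMod N × ZMod N, b s * ZMod.stdAddChar (x.1 * s.1 + x.2 * s.2)) *
        (starRingEnd ℂ)
          (∑ s : ZMod N × ZMod N, b s * ZMod.stdAddChar (x.1 * s.1 + x.2 * s.2)) =
      (N : ℂ) ^ 2 * ∑ s : ZMod N × ZMod N, b s * (starRingEnd ℂ) (b s) := by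
  have hconj : ∀ x : ZMod N × ZMod N,
      (starRingEnd ℂ) (∑ s : ZMod N × ZMod N, b s * ZMod.stdAddChar (x.1 * s.1 + x.2 * s.2)) =
      ∑ s : ZMod N × ZMod N,
        (starRingEnd ℂ) (b s) * ZMod.stdAddChar (-(x.1 * s.1 + x.2 * s.2)) := by
    intro x
    rw [map_sum]
    refine Finset.sum_congr rfl fun s _ => ?_
    rw [map_mul, stdAddChar_neg_eq_conj]
  calc ∑ x : ZMod N × ZMod N,
        (∑ s : ZMod N × ZMod N, b s * ZMod.stdAddChar (x.1 * s.1 + x.2 * s.2)) *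
        (starRingEnd ℂ)
          (∑ s : ZMod N × ZMod N, b s * ZMod.stdAddChar (x.1 * s.1 + x.2 * s.2))
      = ∑ x : ZMod N × ZMod N, ∑ s : ZMod N × ZMod N, ∑ s' : ZMod N × ZMod N,
          (b s * (starRingEnd ℂ) (b s')) *
            ZMod.stdAddChar (x.1 * (s.1 - s'.1) + x.2 * (s.2 - s'.2)) := by
        refine Finset.sum_congr rfl fun x _ => ?_
        rw [hconj x, Finset.sum_mul_sum]
        refine Finset.sum_congr rfl fun s _ => Finset.sum_congr rfl fun s' _ => ?_
        have hadd := AddChar.map_add_eq_mul (ZMod.stdAddChar (N := N))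
          (x.1 * s.1 + x.2 * s.2) (-(x.1 * s'.1 + x.2 * s'.2))
        rw [show x.1 * (s.1 - s'.1) + x.2 * (s.2 - s'.2) =
            (x.1 * s.1 + x.2 * s.2) + -(x.1 * s'.1 + x.2 * s'.2) from by ring, hadd]
        ring
    _ = ∑ s : ZMod N × ZMod N, ∑ s' : ZMod N × ZMod N,
          (b s * (starRingEnd ℂ) (b s')) *
            ∑ x : ZMod N × ZMod N,
              ZMod.stdAddChar (x.1 * (s.1 - s'.1) + x.2 * (s.2 - s'.2)) := by
        rw [Finset.sum_comm]
        refine Finset.sum_congr rfl fun s _ => ?_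
        rw [Finset.sum_comm]
        refine Finset.sum_congr rfl fun s' _ => ?_
        rw [Finset.mul_sum]
    _ = (N : ℂ) ^ 2 * ∑ s : ZMod N × ZMod N, b s * (starRingEnd ℂ) (b s) := by
        rw [Finset.mul_sum]
        refine Finset.sum_congr rfl fun s _ => ?_
        rw [show (∑ s' : ZMod N × ZMod N,
            (b s * (starRingEnd ℂ) (b s')) *
              ∑ x : ZMod N × ZMod N,
                ZMod.stdAddChar (x.1 * (s.1 - s'.1) + x.2 * (s.2 - s'.2))) =
          ∑ s' : ZMod N × ZMod N,
            (b s * (starRingEnd ℂ) (b s')) *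
              (if (s.1 - s'.1, s.2 - s'.2) = (0 : ZMod N × ZMod N) then (N : ℂ) ^ 2 else 0)
          from Finset.sum_congr rfl fun s' _ => by rw [char_sum2 N (s.1 - s'.1, s.2 - s'.2)]]
        have hiff : ∀ s' : ZMod N × ZMod N,
            ((s.1 - s'.1, s.2 - s'.2) = (0 : ZMod N × ZMod N)) ↔ s' = s := by
          intro s'
          simp [Prod.ext_iff, sub_eq_zero, eq_comm]
        rw [Finset.sum_congr rfl fun s' _ => by
          rw [if_congr (hiff s') rfl rfl]]
        simp only [mul_ite, mul_zero]
        rw [Finset.sum_ite_eq' Finset.univ s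
          (fun s' => b s * (starRingEnd ℂ) (b s') * (N : ℂ) ^ 2)]
        simp [mul_comm]

lemma sum_abs_ext2_pow4 (N : ℕ) [NeZero N] (a : ZMod N → ℂ) :
    ∑ x : ZMod N × ZMod N, ‖ext2 N a x‖ ^ 4 =
      (N : ℝ) ^ 2 * ∑ s : ZMod N × ZMod N, Complex.normSq (bcoef N a s) := by
  apply Complex.ofReal_injective
  have h1 : ∀ x : ZMod N × ZMod N,
      ((‖ext2 N a x‖ ^ 4 : ℝ) : ℂ) =
        (ext2 N a x ^ 2) * (starRingEnd ℂ) (ext2 N a x ^ 2) := by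
    intro x
    rw [Complex.mul_conj]
    norm_cast
    rw [← Complex.sq_norm, norm_pow]
    ring
  calc ((∑ x : ZMod N × ZMod N, ‖ext2 N a x‖ ^ 4 : ℝ) : ℂ)
      = ∑ x : ZMod N × ZMod N, (ext2 N a x ^ 2) * (starRingEnd ℂ) (ext2 N a x ^ 2) := by
        push_cast
        exact Finset.sum_congr rfl fun x _ => by
          have := h1 x; push_cast at this ⊢; exact this
    _ = (N : ℂ) ^ 2 * ∑ s : ZMod N × ZMod N, bcoef N a s * (starRingEnd ℂ) (bcoef N a s) := by
        rw [← parseval_aux N (bcoef N a)]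
        exact Finset.sum_congr rfl fun x _ => by rw [ext2_sq]
    _ = ((((N : ℝ) ^ 2 * ∑ s : ZMod N × ZMod N, Complex.normSq (bcoef N a s)) : ℝ) : ℂ) := by
        push_cast
        congr 1
        exact Finset.sum_congr rfl fun s _ => by rw [Complex.mul_conj]

lemma sum_normSq_bcoef_le (N : ℕ) [NeZero N] (a : ZMod N → ℂ)
    (hsol : ∀ s : ZMod N × ZMod N, (solSet' (ZMod N) s.1 s.2).card ≤ 4) :
    ∑ s : ZMod N × ZMod N, Complex.normSq (bcoef N a s) ≤
      4 * (∑ t : ZMod N, Complex.normSq (a t)) ^ 2 := by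
  have step1 : ∀ s : ZMod N × ZMod N, Complex.normSq (bcoef N a s) ≤
      4 * ∑ t ∈ solSet' (ZMod N) s.1 s.2, Complex.normSq (a t.1) * Complex.normSq (a t.2) := by
    intro s
    have h1 : ‖bcoef N a s‖ ≤
        ∑ t ∈ solSet' (ZMod N) s.1 s.2, ‖a t.1 * a t.2‖ :=
      norm_sum_le _ _
    have h2 : Complex.normSq (bcoef N a s) ≤
        (∑ t ∈ solSet' (ZMod N) s.1 s.2, ‖a t.1 * a t.2‖) ^ 2 := by
      rw [← Complex.sq_norm]
      exact pow_le_pow_left₀ (norm_nonneg _) h1 2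
    refine h2.trans ?_
    have h3 := sq_sum_le_card_mul_sum_sq
      (s := solSet' (ZMod N) s.1 s.2) (f := fun t => ‖a t.1 * a t.2‖)
    refine h3.trans ?_
    have h4 : ∀ t : ZMod N × ZMod N,
        ‖a t.1 * a t.2‖ ^ 2 = Complex.normSq (a t.1) * Complex.normSq (a t.2) := by
      intro t
      rw [norm_mul, mul_pow, Complex.sq_norm, Complex.sq_norm]
    rw [Finset.sum_congr rfl fun t _ => h4 t]
    apply mul_le_mul_of_nonneg_right
    · exact_mod_cast hsol s
    · exact Finset.sum_nonneg fun t _ =>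
        mul_nonneg (Complex.normSq_nonneg _) (Complex.normSq_nonneg _)
  calc ∑ s : ZMod N × ZMod N, Complex.normSq (bcoef N a s)
      ≤ ∑ s : ZMod N × ZMod N,
          4 * ∑ t ∈ solSet' (ZMod N) s.1 s.2,
            Complex.normSq (a t.1) * Complex.normSq (a t.2) :=
        Finset.sum_le_sum fun s _ => step1 s
    _ = 4 * ∑ s : ZMod N × ZMod N,
          ∑ t ∈ solSet' (ZMod N) s.1 s.2,
            Complex.normSq (a t.1) * Complex.normSq (a t.2) := by
        rw [Finset.mul_sum]
    _ = 4 * (∑ t : ZMod N, Complex.normSq (a t)) ^ 2 := by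
        congr 1
        rw [Finset.sum_congr rfl fun s (_ : s ∈ Finset.univ) => by rw [solSet'_eq_filter N s]]
        rw [Finset.sum_fiberwise Finset.univ
          (fun t : ZMod N × ZMod N => (t.1 + t.2, t.1 ^ 2 + t.2 ^ 2))
          (fun t => Complex.normSq (a t.1) * Complex.normSq (a t.2))]
        rw [sq, Finset.sum_mul_sum, Fintype.sum_prod_type]

lemma stepB (N : ℕ) [NeZero N] (f : ZMod N × ZMod N → ℂ) :
    ((∑ t : ZMod N, Complex.normSq (dft N f (t, t ^ 2)) : ℝ) : ℂ) =
      (N : ℂ)⁻¹ * ∑ x : ZMod N × ZMod N,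
        f x * (starRingEnd ℂ) (ext2 N (fun t => dft N f (t, t ^ 2)) x) := by
  set a : ZMod N → ℂ := fun t => dft N f (t, t ^ 2) with ha
  have hconj : ∀ x : ZMod N × ZMod N,
      (starRingEnd ℂ) (ext2 N a x) =
        ∑ t : ZMod N, (starRingEnd ℂ) (a t) * ZMod.stdAddChar (-(x.1 * t + x.2 * t ^ 2)) := by
    intro x
    rw [ext2, map_sum]
    exact Finset.sum_congr rfl fun t _ => by rw [map_mul, stdAddChar_neg_eq_conj]
  symm
  calc (N : ℂ)⁻¹ * ∑ x : ZMod N × ZMod N, f x * (starRingEnd ℂ) (ext2 N a x)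
      = (N : ℂ)⁻¹ * ∑ x : ZMod N × ZMod N, ∑ t : ZMod N,
          (starRingEnd ℂ) (a t) * (f x * ZMod.stdAddChar (-(x.1 * t + x.2 * t ^ 2))) := by
        congr 1
        refine Finset.sum_congr rfl fun x _ => ?_
        rw [hconj x, Finset.mul_sum]
        exact Finset.sum_congr rfl fun t _ => by ring
    _ = ∑ t : ZMod N, (starRingEnd ℂ) (a t) *
          ((N : ℂ)⁻¹ * ∑ x : ZMod N × ZMod N,
            f x * ZMod.stdAddChar (-(x.1 * t + x.2 * t ^ 2))) := by
        rw [Finset.sum_comm, Finset.mul_sum]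
        exact Finset.sum_congr rfl fun t _ => by rw [← Finset.mul_sum]; ring
    _ = ∑ t : ZMod N, (starRingEnd ℂ) (a t) * a t := by
        refine Finset.sum_congr rfl fun t _ => ?_
        congr 1
        show _ = dft N f (t, t ^ 2)
        rw [dft_eq N f (t, t ^ 2)]
    _ = ((∑ t : ZMod N, Complex.normSq (a t) : ℝ) : ℂ) := by
        push_cast
        exact Finset.sum_congr rfl fun t _ => by rw [mul_comm, Complex.mul_conj]

lemma parabola_inj (N : ℕ) [NeZero N] :
    Function.Injective (fun t : ZMod N => (t, t ^ 2)) := by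
  intro t t' h
  exact congrArg Prod.fst h

lemma parabola_card (N : ℕ) [NeZero N] : (parabola N).card = N := by
  rw [parabola, Finset.card_image_of_injective _ (parabola_inj N), Finset.card_univ, ZMod.card]

theorem main_ineq (N : ℕ) [NeZero N]
    (hsol : ∀ s : ZMod N × ZMod N, (solSet' (ZMod N) s.1 s.2).card ≤ 4)
    (f : ZMod N × ZMod N → ℂ) :
    (((parabola N).card : ℝ)⁻¹ *
        ∑ m ∈ parabola N, ‖dft N f m‖ ^ 2) ^ ((1 : ℝ) / 2) ≤
      Real.sqrt 2 * (N : ℝ)⁻¹ *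
        (∑ x : ZMod N × ZMod N, ‖f x‖ ^ ((4 : ℝ) / 3)) ^ ((3 : ℝ) / 4) := by
  have hN0 : (0 : ℝ) < N := by exact_mod_cast Nat.pos_of_ne_zero (NeZero.ne N)
  set a : ZMod N → ℂ := fun t => dft N f (t, t ^ 2) with ha
  set S2 : ℝ := ∑ t : ZMod N, Complex.normSq (a t) with hS2
  set L : ℝ := (∑ x : ZMod N × ZMod N, ‖f x‖ ^ ((4 : ℝ) / 3)) ^ ((3 : ℝ) / 4)
    with hL
  have hS2nn : 0 ≤ S2 := Finset.sum_nonneg fun t _ => Complex.normSq_nonneg _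
  have hLnn : 0 ≤ L := Real.rpow_nonneg
    (Finset.sum_nonneg fun x _ => Real.rpow_nonneg (norm_nonneg _) _) _
  -- rewrite the parabola sum
  have hsum : ∑ m ∈ parabola N, ‖dft N f m‖ ^ 2 = S2 := by
    rw [parabola, Finset.sum_image (fun t _ t' _ h => parabola_inj N h)]
    exact Finset.sum_congr rfl fun t _ => by rw [Complex.sq_norm]
  -- Hölder step
  have hHolder : S2 ≤ (N : ℝ)⁻¹ * L *
      (∑ x : ZMod N × ZMod N, ‖ext2 N a x‖ ^ (4 : ℝ)) ^ ((1 : ℝ) / 4) := by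
    have h1 : S2 ≤ (N : ℝ)⁻¹ *
        ∑ x : ZMod N × ZMod N, ‖f x‖ * ‖ext2 N a x‖ := by
      have h2 : (S2 : ℝ) = ‖(S2 : ℂ)‖ := by
        rw [Complex.norm_real, Real.norm_eq_abs, abs_of_nonneg hS2nn]
      rw [h2, stepB N f]
      rw [norm_mul]
      have h3 : ‖(N : ℂ)⁻¹‖ = (N : ℝ)⁻¹ := by
        rw [norm_inv, Complex.norm_natCast]
      rw [h3]
      apply mul_le_mul_of_nonneg_left _ (by positivity)
      refine (norm_sum_le _ _).trans ?_
      refine Finset.sum_le_sum fun x _ => ?_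
      rw [norm_mul, Complex.norm_conj]
    refine h1.trans ?_
    rw [mul_assoc]
    apply mul_le_mul_of_nonneg_left _ (by positivity)
    have hpq : Real.HolderConjugate ((4 : ℝ) / 3) 4 :=
      (Real.holderConjugate_iff_eq_conjExponent (by norm_num)).mpr (by norm_num)
    have := Real.inner_le_Lp_mul_Lq Finset.univ
      (fun x : ZMod N × ZMod N => ‖f x‖)
      (fun x : ZMod N × ZMod N => ‖ext2 N a x‖) hpq
    simp only [abs_of_nonneg (norm_nonneg _)] at this
    refine this.trans (le_of_eq ?_)
    norm_num
    exact Or.inl rfl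
  -- bound the L⁴ norm of the extension
  have hM4 : ∑ x : ZMod N × ZMod N, ‖ext2 N a x‖ ^ (4 : ℝ) ≤
      4 * (N : ℝ) ^ 2 * S2 ^ 2 := by
    have h1 : ∑ x : ZMod N × ZMod N, ‖ext2 N a x‖ ^ (4 : ℝ) =
        ∑ x : ZMod N × ZMod N, ‖ext2 N a x‖ ^ (4 : ℕ) := by
      refine Finset.sum_congr rfl fun x _ => ?_
      rw [show ((4 : ℝ)) = ((4 : ℕ) : ℝ) by norm_num, Real.rpow_natCast]
    rw [h1, sum_abs_ext2_pow4 N a]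
    have h2 := sum_normSq_bcoef_le N a hsol
    calc (N : ℝ) ^ 2 * ∑ s : ZMod N × ZMod N, Complex.normSq (bcoef N a s)
        ≤ (N : ℝ) ^ 2 * (4 * S2 ^ 2) :=
          mul_le_mul_of_nonneg_left h2 (by positivity)
      _ = 4 * (N : ℝ) ^ 2 * S2 ^ 2 := by ring
  -- put it together : S2 ≤ const * sqrt S2
  have hRoot : S2 ≤ (N : ℝ)⁻¹ * L * (Real.sqrt 2 * Real.sqrt N * Real.sqrt S2) := by
    refine hHolder.trans ?_
    apply mul_le_mul_of_nonneg_left _ (by positivity)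
    have h3 : (4 * (N : ℝ) ^ 2 * S2 ^ 2) ^ ((1 : ℝ) / 4) =
        Real.sqrt 2 * Real.sqrt N * Real.sqrt S2 := by
      have h4 : 4 * (N : ℝ) ^ 2 * S2 ^ 2 =
          (Real.sqrt 2 * Real.sqrt N * Real.sqrt S2) ^ (4 : ℕ) := by
        have e2 : Real.sqrt 2 ^ (4 : ℕ) = 4 := by
          rw [show (4 : ℕ) = 2 * 2 from rfl, pow_mul, Real.sq_sqrt (by norm_num)]
          norm_num
        have eN : Real.sqrt N ^ (4 : ℕ) = (N : ℝ) ^ 2 := by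
          rw [show (4 : ℕ) = 2 * 2 from rfl, pow_mul, Real.sq_sqrt hN0.le]
        have eS : Real.sqrt S2 ^ (4 : ℕ) = S2 ^ 2 := by
          rw [show (4 : ℕ) = 2 * 2 from rfl, pow_mul, Real.sq_sqrt hS2nn]
        rw [mul_pow, mul_pow, e2, eN, eS]
      rw [h4, ← Real.rpow_natCast (Real.sqrt 2 * Real.sqrt N * Real.sqrt S2) 4,
        ← Real.rpow_mul (by positivity)]
      norm_num
    rw [← h3]
    exact Real.rpow_le_rpow (Finset.sum_nonneg fun x _ => Real.rpow_nonneg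
      (norm_nonneg _) _) hM4 (by norm_num)
  have hsqrt : Real.sqrt S2 ≤ (N : ℝ)⁻¹ * L * (Real.sqrt 2 * Real.sqrt N) := by
    rcases eq_or_lt_of_le (Real.sqrt_nonneg S2) with h | h
    · rw [← h]; positivity
    · have h6 : Real.sqrt S2 * Real.sqrt S2 ≤
          ((N : ℝ)⁻¹ * L * (Real.sqrt 2 * Real.sqrt N)) * Real.sqrt S2 := by
        rw [Real.mul_self_sqrt hS2nn]
        refine hRoot.trans (le_of_eq ?_)
        ring
      exact le_of_mul_le_mul_right h6 h
  -- final computation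
  rw [hsum, parabola_card]
  have hfin : ((N : ℝ)⁻¹ * S2) ^ ((1 : ℝ) / 2) =
      Real.sqrt ((N : ℝ)⁻¹) * Real.sqrt S2 := by
    rw [← Real.sqrt_eq_rpow, Real.sqrt_mul (by positivity)]
  rw [hfin]
  calc Real.sqrt ((N : ℝ)⁻¹) * Real.sqrt S2
      ≤ Real.sqrt ((N : ℝ)⁻¹) * ((N : ℝ)⁻¹ * L * (Real.sqrt 2 * Real.sqrt N)) :=
        mul_le_mul_of_nonneg_left hsqrt (Real.sqrt_nonneg _)
    _ = Real.sqrt 2 * (N : ℝ)⁻¹ * L * (Real.sqrt ((N : ℝ)⁻¹) * Real.sqrt N) := by ring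
    _ = Real.sqrt 2 * (N : ℝ)⁻¹ * L := by
        rw [← Real.sqrt_mul (by positivity), inv_mul_cancel₀ hN0.ne', Real.sqrt_one, mul_one]

theorem restriction_pq (p q : ℕ) (hp : p.Prime) (hq : q.Prime) (hpq : p ≠ q)
    (N : ℕ) (hN : N = p * q) [NeZero N]
    (f : ZMod N × ZMod N → ℂ) :
    (((parabola N).card : ℝ)⁻¹ *
        ∑ m ∈ parabola N, ‖dft N f m‖ ^ 2) ^ ((1 : ℝ) / 2) ≤
      Real.sqrt 2 * (N : ℝ)⁻¹ *
        (∑ x : ZMod N × ZMod N, ‖f x‖ ^ ((4 : ℝ) / 3)) ^ ((3 : ℝ) / 4) := by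
  subst hN
  exact main_ineq (p * q) (fun s => solSet'_card_pq p q hp hq hpq s.1 s.2) f
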